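/- Let n ≥ 1 and let w_1 ≥ w_2 ≥ ... ≥ w_n be real numbers. Let p(x) = ∏_{k=1}^{n} (x - w_k) and let P be any real-polynomial antiderivative of p (i.e. P' = p). Then there exists a real number c such that P(x) - c has all of its complex roots real if and only if max{P(w_k) : 1 ≤ k ≤ n, k odd} ≤ min{P(w_k) : 1 ≤ k ≤ n, k even} (with the convention that an empty max is -∞ and an empty min is +∞). -/

import Mathlib

open Polynomial

section Aux

open Multiset

lemma sum_count_le {α : Type*} [DecidableEq α] (s : Finset α) (M : Multiset α) :
    ∑ x ∈ s, M.count x ≤ Multiset.card M := by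
  calc ∑ x ∈ s, M.count x
      = ∑ x ∈ s.filter (· ∈ M.toFinset), M.count x :=
        Eq.symm <| Finset.sum_filter_of_ne fun x _ hc =>
          Multiset.mem_toFinset.2 (Multiset.count_pos.1 (Nat.pos_of_ne_zero hc))
    _ ≤ ∑ x ∈ M.toFinset, M.count x :=
        Finset.sum_le_sum_of_subset fun x hx => (Finset.mem_filter.1 hx).2
    _ = Multiset.card M := M.toFinset_sum_count_eq

lemma rolle_filter (q : ℝ[X]) (S : ℝ → Prop) [DecidablePred S]
    (hS : ∀ x y z : ℝ, S x → S y → x < z → z < y → S z) :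
    Multiset.card (q.roots.filter S) ≤ Multiset.card ((derivative q).roots.filter S) + 1 := by
  rcases eq_or_ne (derivative q) 0 with h | h
  · rw [eq_C_of_derivative_eq_zero h, roots_C]
    simp
  have hq : q ≠ 0 := fun h0 => h (by simp [h0])
  set M := q.roots.filter S with hM
  set N := (derivative q).roots.filter S with hN
  set A := M.toFinset with hA
  set D := N.toFinset with hD
  have hAD : A.card ≤ (D \ A).card + 1 := by
    refine Finset.card_le_diff_of_interleaved fun x hx y hy hxy _ => ?_
    simp only [hA, hM, Multiset.mem_toFinset, Multiset.mem_filter, mem_roots hq] at hx hy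
    obtain ⟨z, hz1, hz2⟩ := exists_deriv_eq_zero hxy q.continuousOn (hx.1.trans hy.1.symm)
    refine ⟨z, ?_, hz1⟩
    simp only [hD, hN, Multiset.mem_toFinset, Multiset.mem_filter, mem_roots h]
    exact ⟨by rwa [IsRoot, ← q.deriv], hS _ _ _ hx.2 hy.2 hz1.1 hz1.2⟩
  have hcntA : ∀ x ∈ A, M.count x = q.rootMultiplicity x := by
    intro x hx
    have hSx : S x := (Multiset.mem_filter.1 (Multiset.mem_toFinset.1 hx)).2
    rw [hM, Multiset.count_filter, if_pos hSx, count_roots]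
  have hcntN : ∀ x : ℝ, S x → N.count x = (derivative q).rootMultiplicity x := by
    intro x hSx
    rw [hN, Multiset.count_filter, if_pos hSx, count_roots]
  calc Multiset.card M = ∑ x ∈ A, M.count x := (M.toFinset_sum_count_eq).symm
    _ = ∑ x ∈ A, (q.rootMultiplicity x - 1 + 1) := by
        refine Finset.sum_congr rfl fun x hx => ?_
        rw [hcntA x hx]
        exact (tsub_add_cancel_of_le <| Nat.succ_le_iff.2 <| (count_roots q).symm ▸
          Multiset.count_pos.2 (Multiset.mem_of_mem_filter (Multiset.mem_toFinset.1 hx))).symm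
    _ = (∑ x ∈ A, (q.rootMultiplicity x - 1)) + A.card := by
        simp only [Finset.sum_add_distrib, Finset.card_eq_sum_ones]
    _ ≤ (∑ x ∈ A, (derivative q).rootMultiplicity x) + ((D \ A).card + 1) :=
        add_le_add (Finset.sum_le_sum fun x _ =>
          rootMultiplicity_sub_one_le_derivative_rootMultiplicity _ _) hAD
    _ ≤ (∑ x ∈ A, N.count x) + ((∑ x ∈ D \ A, N.count x) + 1) := by
        refine add_le_add (Finset.sum_le_sum fun x hx => ?_)
          (add_le_add_left ((Finset.card_eq_sum_ones _).trans_le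
            (Finset.sum_le_sum fun x hx => ?_)) _)
        · rw [hcntN x (Multiset.mem_filter.1 (Multiset.mem_toFinset.1 hx)).2]
        · exact Nat.succ_le_iff.2 <| Multiset.count_pos.2 <|
            Multiset.mem_toFinset.1 (Finset.mem_sdiff.1 hx).1
    _ = (∑ x ∈ A ∪ (D \ A), N.count x) + 1 := by
        rw [Finset.sum_union Finset.disjoint_sdiff]; ring
    _ ≤ Multiset.card N + 1 := add_le_add_left (sum_count_le _ _) _

lemma card_roots_of_im_eq_zero (q : ℝ[X]) (hq : q ≠ 0)
    (hH : ∀ z ∈ (q.map (algebraMap ℝ ℂ)).roots, z.im = 0) :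
    Multiset.card q.roots = q.natDegree := by
  set f := algebraMap ℝ ℂ with hf
  have hinj : Function.Injective f := f.injective
  have hqm : q.map f ≠ 0 := (Polynomial.map_ne_zero_iff hinj).2 hq
  have hcard : Multiset.card (q.map f).roots = q.natDegree := by
    rw [splits_iff_card_roots.1 (IsAlgClosed.splits (q.map f))] at *
    · exact natDegree_map f
  have hle : (q.map f).roots ≤ q.roots.map f := by
    rw [Multiset.le_iff_count]
    intro z
    by_cases hz : z ∈ (q.map f).roots
    · have him := hH z hz
      have hre : f z.re = z := Complex.ext (by simp [hf]) (by simp [hf, him])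
      have hcnt : Multiset.count z ((q.map f).roots) = Multiset.count z (q.roots.map f) := by
        calc Multiset.count z (q.map f).roots = rootMultiplicity z (q.map f) := count_roots _
          _ = rootMultiplicity (f z.re) (q.map f) := by rw [hre]
          _ = rootMultiplicity z.re q := (eq_rootMultiplicity_map hinj z.re).symm
          _ = Multiset.count z.re q.roots := (count_roots _).symm
          _ = Multiset.count (f z.re) (q.roots.map f) :=
              (Multiset.count_map_eq_count' f _ hinj _).symm
          _ = Multiset.count z (q.roots.map f) := by rw [hre]
      exact hcnt.le
    · rw [Multiset.count_eq_zero_of_notMem hz]; exact Nat.zero_le _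
  have := Multiset.card_le_card hle
  rw [Multiset.card_map, hcard] at this
  exact le_antisymm (q.card_roots') this

lemma im_eq_zero_of_card_roots (q : ℝ[X]) (h : Multiset.card q.roots = q.natDegree) :
    ∀ z ∈ (q.map (algebraMap ℝ ℂ)).roots, z.im = 0 := by
  intro z hz
  rw [(splits_iff_card_roots.2 h).roots_map _] at hz
  obtain ⟨r, _, rfl⟩ := Multiset.mem_map.1 hz
  simp

end Aux

/-- A real polynomial is hyperbolic if all of its complex roots are real. -/
def Hyperbolic (p : Polynomial ℝ) : Prop :=
  ∀ z ∈ (p.map (algebraMap ℝ ℂ)).roots, z.im = 0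

theorem stmt_0 (n : ℕ) (hn : 1 ≤ n) (w : ℕ → ℝ)
    (hw : ∀ i ∈ Finset.Ico 1 n, w (i + 1) ≤ w i)
    (p P : Polynomial ℝ)
    (hp : p = ∏ k ∈ Finset.Icc 1 n, (X - C (w k)))
    (hP : derivative P = p) :
    (∃ c : ℝ, Hyperbolic (P - C c)) ↔
      (∀ j ∈ Finset.Icc 1 n, ∀ k ∈ Finset.Icc 1 n, Even j → Odd k →
        P.eval (w k) ≤ P.eval (w j)) := by
  classical
  -- antitonicity of w on [1, n]
  have hanti : ∀ i j : ℕ, 1 ≤ i → i ≤ j → j ≤ n → w j ≤ w i := by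
    intro i j h1 hij hjn
    induction j with
    | zero => omega
    | succ m ih =>
      rcases Nat.lt_or_ge i (m+1) with hlt | hge
      · have him : i ≤ m := by omega
        have h1m : w (m+1) ≤ w m := hw m (Finset.mem_Ico.2 ⟨by omega, by omega⟩)
        exact h1m.trans (ih him (by omega))
      · have : i = m + 1 := by omega
        rw [this]
  -- basic facts about p
  have hpmonic : p.Monic := hp ▸ monic_prod_of_monic _ _ fun k _ => monic_X_sub_C _
  have hp0 : p ≠ 0 := hpmonic.ne_zero
  have hcardIcc : (Finset.Icc 1 n).card = n := by rw [Nat.card_Icc]; omega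
  have hpdeg : p.natDegree = n := by
    rw [hp, natDegree_prod _ _ fun k _ => X_sub_C_ne_zero (w k)]
    simp [hcardIcc]
  have hproots : p.roots = (Finset.Icc 1 n).val.map w := by
    rw [hp, Finset.prod_eq_multiset_prod]
    rw [show ((Finset.Icc 1 n).val.map fun k => X - C (w k))
        = (((Finset.Icc 1 n).val.map w).map fun a => X - C a) by rw [Multiset.map_map]; rfl]
    exact roots_multiset_prod_X_sub_C _
  -- leading coefficient of P
  have hco : P.coeff (n + 1) * ((n : ℝ) + 1) = 1 := by
    have := coeff_derivative P n
    rw [hP] at this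
    have hpc : p.coeff n = 1 := by
      have := hpmonic.coeff_natDegree
      rwa [hpdeg] at this
    rw [hpc] at this
    exact this.symm
  have hcopos : 0 < P.coeff (n + 1) := by
    have hpos : (0:ℝ) < (n : ℝ) + 1 := by positivity
    nlinarith [hco]
  have hPdeg : P.natDegree = n + 1 := by
    refine le_antisymm ?_ (le_natDegree_of_ne_zero (by exact ne_of_gt hcopos))
    rw [natDegree_le_iff_coeff_eq_zero]
    intro N hN
    have hN1 : N - 1 + 1 = N := by omega
    have h1 := coeff_derivative P (N - 1)
    rw [hP, hN1] at h1
    have h2 : p.coeff (N - 1) = 0 := coeff_eq_zero_of_natDegree_lt (by omega)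
    rw [h2] at h1
    have h3 : ((N - 1 : ℕ) : ℝ) + 1 ≠ 0 := by positivity
    have := h1.symm
    rcases mul_eq_zero.1 this with h | h
    · exact h
    · exact absurd h h3
  -- facts about q = P - C c
  have hqdeg : ∀ c : ℝ, (P - C c).natDegree = n + 1 := fun c => by
    rw [natDegree_sub_C, hPdeg]
  have hq0 : ∀ c : ℝ, P - C c ≠ 0 := by
    intro c h
    have := hqdeg c
    rw [h, natDegree_zero] at this
    omega
  have hqd : ∀ c : ℝ, derivative (P - C c) = p := fun c => by
    rw [derivative_sub, derivative_C, sub_zero, hP]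
  have hqlc : ∀ c : ℝ, (P - C c).leadingCoeff = P.coeff (n + 1) := by
    intro c
    rw [leadingCoeff, hqdeg c, coeff_sub, coeff_C]
    simp
  have hqdegree : ∀ c : ℝ, 0 < (P - C c).degree := by
    intro c
    rw [degree_eq_natDegree (hq0 c), hqdeg c]
    exact_mod_cast Nat.succ_pos n
  constructor
  · rintro ⟨c, hc⟩
    have hcards : Multiset.card (P - C c).roots = (P - C c).natDegree :=
      card_roots_of_im_eq_zero _ (hq0 c) hc
    set q := P - C c with hq
    have hsplit : Splits q := splits_iff_card_roots.2 hcards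
    have hcard' : Multiset.card q.roots = n + 1 := by rw [hcards, hqdeg]
    have key : ∀ m ∈ Finset.Icc 1 n, 0 ≤ (-1 : ℝ)^m * q.eval (w m) := by
      intro m hm
      obtain ⟨hm1, hmn⟩ := Finset.mem_Icc.1 hm
      by_cases hmem : q.eval (w m) = 0
      · rw [hmem, mul_zero]
      have hnotmem : ∀ r ∈ q.roots, r ≠ w m := by
        intro r hr hrm
        exact hmem (hrm ▸ ((mem_roots (hq0 c)).1 hr))
      -- upper bound on roots above w m
      have hub : Multiset.card (q.roots.filter (fun r => w m < r)) ≤ m := by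
        have h1 := rolle_filter q (fun r => w m < r)
          (fun x y z hx _ hxz _ => lt_trans hx hxz)
        rw [hqd c, hproots] at h1
        have h2 : (((Finset.Icc 1 n).val.map w).filter (fun r => w m < r))
            = (((Finset.Icc 1 n).val.filter (fun kk => w m < w kk)).map w) := by
          rw [Multiset.filter_map]
          rfl
        rw [h2, Multiset.card_map] at h1
        have h3 : ((Finset.Icc 1 n).filter (fun kk => w m < w kk)) ⊆ Finset.Icc 1 (m - 1) := by
          intro kk hkk
          obtain ⟨hkk1, hkk2⟩ := Finset.mem_filter.1 hkk
          obtain ⟨ha, hb⟩ := Finset.mem_Icc.1 hkk1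
          refine Finset.mem_Icc.2 ⟨ha, ?_⟩
          by_contra hcon
          exact absurd (hanti m kk hm1 (by omega) hb) (not_le.2 hkk2)
        have h4 := Finset.card_le_card h3
        rw [Nat.card_Icc] at h4
        have : Multiset.card (((Finset.Icc 1 n).val.filter (fun kk => w m < w kk)))
            = ((Finset.Icc 1 n).filter (fun kk => w m < w kk)).card := rfl
        omega
      -- lower bound
      have hlbn : Multiset.card (q.roots.filter (fun r => r < w m)) ≤ n - m + 1 := by
        have h1 := rolle_filter q (fun r => r < w m)
          (fun x y z _ hy _ hzy => lt_trans hzy hy)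
        rw [hqd c, hproots] at h1
        have h2 : (((Finset.Icc 1 n).val.map w).filter (fun r => r < w m))
            = (((Finset.Icc 1 n).val.filter (fun kk => w kk < w m)).map w) := by
          rw [Multiset.filter_map]
          rfl
        rw [h2, Multiset.card_map] at h1
        have h3 : ((Finset.Icc 1 n).filter (fun kk => w kk < w m)) ⊆ Finset.Icc (m+1) n := by
          intro kk hkk
          obtain ⟨hkk1, hkk2⟩ := Finset.mem_filter.1 hkk
          obtain ⟨ha, hb⟩ := Finset.mem_Icc.1 hkk1
          refine Finset.mem_Icc.2 ⟨?_, hb⟩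
          by_contra hcon
          exact absurd (hanti kk m ha (by omega) hmn) (not_le.2 hkk2)
        have h4 := Finset.card_le_card h3
        rw [Nat.card_Icc] at h4
        have : Multiset.card (((Finset.Icc 1 n).val.filter (fun kk => w kk < w m)))
            = ((Finset.Icc 1 n).filter (fun kk => w kk < w m)).card := rfl
        omega
      have hfadd := Multiset.filter_add_not (fun r => r < w m) q.roots
      have hnoteq : q.roots.filter (fun r => ¬ r < w m) = q.roots.filter (fun r => w m < r) := by
        refine Multiset.filter_congr ?_
        intro r hr
        have hne := hnotmem r hr
        constructor
        · intro h; exact lt_of_le_of_ne (not_lt.1 h) (Ne.symm hne)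
        · intro h h'; exact absurd (lt_trans h' h) (lt_irrefl _)
      rw [hnoteq] at hfadd
      have hcards2 := congrArg Multiset.card hfadd
      rw [Multiset.card_add, hcard'] at hcards2
      have hge : m ≤ Multiset.card (q.roots.filter (fun r => w m < r)) := by omega
      have hcardgt : Multiset.card (q.roots.filter (fun r => w m < r)) = m :=
        le_antisymm hub hge
      -- product representation
      set Rp := q.roots.filter (fun r => w m < r) with hRp
      set Rn := q.roots.filter (fun r => ¬ w m < r) with hRn
      have hsplitR : q.roots = Rp + Rn := (Multiset.filter_add_not _ _).symm
      have heval : q.eval (w m) = q.leadingCoeff * ((q.roots.map (fun r => w m - r)).prod) := by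
        conv_lhs => rw [hsplit.eq_prod_roots]
        rw [eval_mul, eval_C, eval_multiset_prod, Multiset.map_map]
        congr 1
        exact congrArg Multiset.prod (Multiset.map_congr rfl (fun r _ => by simp))
      have hprodn : 0 < ((Rn.map (fun r => w m - r)).prod) := by
        refine Multiset.prod_pos ?_
        intro a ha
        obtain ⟨r, hr, rfl⟩ := Multiset.mem_map.1 ha
        obtain ⟨hr1, hr2⟩ := Multiset.mem_filter.1 hr
        have : r < w m := lt_of_le_of_ne (not_lt.1 hr2) (hnotmem r hr1)
        linarith
      have hprodp_pos : 0 < ((Rp.map (fun r => r - w m)).prod) := by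
        refine Multiset.prod_pos ?_
        intro a ha
        obtain ⟨r, hr, rfl⟩ := Multiset.mem_map.1 ha
        obtain ⟨hr1, hr2⟩ := Multiset.mem_filter.1 hr
        linarith
      have hprodp : ((Rp.map (fun r => w m - r)).prod)
          = (-1)^m * ((Rp.map (fun r => r - w m)).prod) := by
        rw [show Rp.map (fun r => w m - r) = (Rp.map (fun r => r - w m)).map Neg.neg by
          rw [Multiset.map_map]; refine Multiset.map_congr rfl ?_; intro x _; simp]
        rw [Multiset.prod_map_neg, Multiset.card_map]
        rw [hRp, hcardgt]
      have hpow : (-1:ℝ)^m * (-1)^m = 1 := by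
        rw [← pow_add]
        exact Even.neg_one_pow (Even.add_self m)
      have hfinal : (-1:ℝ)^m * q.eval (w m)
          = ((-1:ℝ)^m * (-1)^m) * (q.leadingCoeff *
            (((Rp.map (fun r => r - w m)).prod) * ((Rn.map (fun r => w m - r)).prod))) := by
        rw [heval]
        conv_lhs => rw [hsplitR]
        rw [Multiset.map_add, Multiset.prod_add, hprodp]
        ring
      rw [hfinal, hpow, one_mul, hqlc c]
      have hpos := mul_pos hcopos (mul_pos hprodp_pos hprodn)
      exact le_of_lt hpos
    intro j hj k hk hje hko
    have h1 := key j hj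
    have h2 := key k hk
    rw [hje.neg_one_pow, one_mul] at h1
    rw [hko.neg_one_pow] at h2
    have e1 : q.eval (w j) = P.eval (w j) - c := by rw [hq]; simp
    have e2 : q.eval (w k) = P.eval (w k) - c := by rw [hq]; simp
    rw [e1] at h1
    rw [e2] at h2
    linarith

  · intro hcond
    have hmain : ∃ c : ℝ, Multiset.card (P - C c).roots = (P - C c).natDegree := by
      set Odds := (Finset.Icc 1 n).filter (fun k => Odd k) with hOdds
      have hOne : Odds.Nonempty :=
        ⟨1, Finset.mem_filter.2 ⟨Finset.mem_Icc.2 ⟨le_refl 1, hn⟩, odd_one⟩⟩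
      set c := Odds.sup' hOne (fun k => P.eval (w k)) with hc
      refine ⟨c, ?_⟩
      have hodd : ∀ k ∈ Finset.Icc 1 n, Odd k → P.eval (w k) ≤ c := by
        intro k hk hko
        exact Finset.le_sup' (fun k => eval (w k) P) (Finset.mem_filter.2 ⟨hk, hko⟩)
      have heven : ∀ j ∈ Finset.Icc 1 n, Even j → c ≤ P.eval (w j) := by
        intro j hj hje
        refine Finset.sup'_le _ _ fun k hk => ?_
        obtain ⟨hk1, hk2⟩ := Finset.mem_filter.1 hk
        exact hcond j hj k hk1 hje hk2
      set q := P - C c with hq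
      have hsgn : ∀ m, 1 ≤ m → m ≤ n → q.eval (w m) ≠ 0 →
          ((Even m → 0 < q.eval (w m)) ∧ (Odd m → q.eval (w m) < 0)) := by
        intro m h1 h2 h3
        have he : q.eval (w m) = P.eval (w m) - c := by rw [hq]; simp
        have hm : m ∈ Finset.Icc 1 n := Finset.mem_Icc.2 ⟨h1, h2⟩
        constructor
        · intro hev
          have := heven m hm hev
          rw [he] at h3 ⊢
          cases lt_or_eq_of_le (sub_nonneg.2 this) with
          | inl h => exact h
          | inr h => exact absurd h.symm h3
        · intro hod
          have := hodd m hm hod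
          rw [he] at h3 ⊢
          cases lt_or_eq_of_le (sub_nonpos.2 this) with
          | inl h => exact h
          | inr h => exact absurd h h3
      have hlcq : 0 < q.leadingCoeff := by rw [hq, hqlc c]; exact hcopos
      have htop : Filter.Tendsto (fun x => eval x q) Filter.atTop Filter.atTop :=
        tendsto_atTop_of_leadingCoeff_nonneg q (hqdegree c) hlcq.le
      have hq2eval : ∀ y : ℝ, eval y (q.comp (-X)) = eval (-y) q := fun y => by
        rw [eval_comp]; simp
      have hndX : (-X : ℝ[X]).natDegree = 1 := by simp
      have hq2nd : (q.comp (-X)).natDegree = n + 1 := by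
        rw [natDegree_comp, hndX, mul_one, hq, hqdeg c]
      have hq2ne : q.comp (-X) ≠ 0 := by
        intro h
        rw [h, natDegree_zero] at hq2nd
        omega
      have hq2deg : 0 < (q.comp (-X)).degree := by
        rw [degree_eq_natDegree hq2ne, hq2nd]
        exact_mod_cast Nat.succ_pos n
      have hq2lc : (q.comp (-X)).leadingCoeff = q.leadingCoeff * (-1)^(n+1) := by
        rw [leadingCoeff_comp (by rw [hndX]; exact one_ne_zero)]
        have h1 : (-X : ℝ[X]).leadingCoeff = -1 := by
          rw [leadingCoeff_neg, leadingCoeff_X]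
        rw [h1, hq, hqdeg c]
      have htok : ∀ k : ℕ, ∃ s : ℝ, k ≤ n →
          (eval s q = 0 ∧ (1 ≤ k → s ≤ w k) ∧ (k < n → w (k+1) ≤ s)) := by
        intro k
        by_cases hkn : k ≤ n
        swap
        · exact ⟨0, fun h => absurd h hkn⟩
        by_cases hwk : 1 ≤ k ∧ eval (w k) q = 0
        · exact ⟨w k, fun _ => ⟨hwk.2, fun _ => le_refl _,
            fun hkn' => hanti k (k+1) hwk.1 (Nat.le_succ k) hkn'⟩⟩
        by_cases hwk1 : k < n ∧ eval (w (k+1)) q = 0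
        · exact ⟨w (k+1), fun _ => ⟨hwk1.2,
            fun h1 => hanti k (k+1) h1 (Nat.le_succ k) hwk1.1, fun _ => le_refl _⟩⟩
        rcases Nat.eq_zero_or_pos k with hk0 | hk1
        · subst hk0
          have hne : eval (w (0+1)) q ≠ 0 := fun h => hwk1 ⟨hn, h⟩
          have hneg : eval (w 1) q < 0 := (hsgn 1 (le_refl 1) hn (by simpa using hne)).2 odd_one
          obtain ⟨b, hb1, hb2⟩ :=
            ((htop.eventually_ge_atTop 1).and (Filter.eventually_ge_atTop (w 1))).exists
          obtain ⟨s, hs1, hs2⟩ := intermediate_value_Icc hb2 q.continuousOn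
            (Set.mem_Icc.2 ⟨hneg.le, by linarith⟩)
          exact ⟨s, fun _ => ⟨hs2, fun h => absurd h (by omega), fun _ => by simpa using hs1.1⟩⟩
        rcases Nat.lt_or_ge k n with hklt | hkge
        · have hne1 : eval (w k) q ≠ 0 := fun h => hwk ⟨hk1, h⟩
          have hne2 : eval (w (k+1)) q ≠ 0 := fun h => hwk1 ⟨hklt, h⟩
          have hle : w (k+1) ≤ w k := hanti k (k+1) hk1 (Nat.le_succ k) hklt
          rcases Nat.even_or_odd k with hev | hod
          · have h1 : 0 < eval (w k) q := (hsgn k hk1 (le_of_lt hklt) hne1).1 hev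
            have h2 : eval (w (k+1)) q < 0 := (hsgn (k+1) (by omega) hklt hne2).2 (Even.add_one hev)
            obtain ⟨s, hs1, hs2⟩ := intermediate_value_Icc hle q.continuousOn
              (Set.mem_Icc.2 ⟨h2.le, h1.le⟩)
            exact ⟨s, fun _ => ⟨hs2, fun _ => hs1.2, fun _ => hs1.1⟩⟩
          · have h1 : eval (w k) q < 0 := (hsgn k hk1 (le_of_lt hklt) hne1).2 hod
            have h2 : 0 < eval (w (k+1)) q := (hsgn (k+1) (by omega) hklt hne2).1 (Odd.add_one hod)
            obtain ⟨s, hs1, hs2⟩ := intermediate_value_Icc' hle q.continuousOn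
              (Set.mem_Icc.2 ⟨h1.le, h2.le⟩)
            exact ⟨s, fun _ => ⟨hs2, fun _ => hs1.2, fun _ => hs1.1⟩⟩
        · have hkeq : k = n := le_antisymm hkn hkge
          subst hkeq
          have hne : eval (w k) q ≠ 0 := fun h => hwk ⟨hn, h⟩
          rcases Nat.even_or_odd k with hev | hod
          · have h1 : 0 < eval (w k) q := (hsgn k hn (le_refl k) hne).1 hev
            have hlc2 : (q.comp (-X)).leadingCoeff ≤ 0 := by
              rw [hq2lc, Odd.neg_one_pow (Even.add_one hev)]
              nlinarith [hlcq]
            have hbot := tendsto_atBot_of_leadingCoeff_nonpos _ hq2deg hlc2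
            obtain ⟨y, hy1, hy2⟩ :=
              ((hbot.eventually_le_atBot (-1)).and (Filter.eventually_ge_atTop (-(w k)))).exists
            have hble : -y ≤ w k := by linarith
            have hevb : eval (-y) q ≤ -1 := by rw [← hq2eval y]; exact hy1
            obtain ⟨s, hs1, hs2⟩ := intermediate_value_Icc hble q.continuousOn
              (Set.mem_Icc.2 ⟨by linarith, h1.le⟩)
            exact ⟨s, fun _ => ⟨hs2, fun _ => hs1.2, fun h => absurd h (lt_irrefl k)⟩⟩
          · have h1 : eval (w k) q < 0 := (hsgn k hn (le_refl k) hne).2 hod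
            have hlc2 : 0 ≤ (q.comp (-X)).leadingCoeff := by
              rw [hq2lc, Even.neg_one_pow (Odd.add_one hod), mul_one]
              exact hlcq.le
            have htop2 := tendsto_atTop_of_leadingCoeff_nonneg _ hq2deg hlc2
            obtain ⟨y, hy1, hy2⟩ :=
              ((htop2.eventually_ge_atTop 1).and (Filter.eventually_ge_atTop (-(w k)))).exists
            have hble : -y ≤ w k := by linarith
            have hevb : (1:ℝ) ≤ eval (-y) q := by rw [← hq2eval y]; exact hy1
            obtain ⟨s, hs1, hs2⟩ := intermediate_value_Icc' hble q.continuousOn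
              (Set.mem_Icc.2 ⟨h1.le, by linarith⟩)
            exact ⟨s, fun _ => ⟨hs2, fun _ => hs1.2, fun h => absurd h (lt_irrefl k)⟩⟩
      choose sfun hsfun using htok
      refine le_antisymm q.card_roots' ?_
      rw [hqdeg c]
      have hT : ((Finset.range (n+1)).val.map sfun) ≤ q.roots := by
        rw [Multiset.le_iff_count]
        intro a
        rw [Multiset.count_map]
        have hcnt : Multiset.card (Multiset.filter (fun k => a = sfun k) (Finset.range (n+1)).val)
            = ((Finset.range (n+1)).filter (fun k => a = sfun k)).card := rfl
        rw [hcnt]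
        set Ta := (Finset.range (n+1)).filter (fun k => a = sfun k) with hTa
        rcases Finset.eq_empty_or_nonempty Ta with he | hne
        · rw [he]
          simp
        have hmem : ∀ k ∈ Ta, k ≤ n ∧ a = sfun k := fun k hk =>
          ⟨by have := Finset.mem_range.1 (Finset.mem_filter.1 hk).1; omega,
           (Finset.mem_filter.1 hk).2⟩
        have hroota : eval a q = 0 := by
          obtain ⟨k0, hk0⟩ := hne
          obtain ⟨hk0n, hk0a⟩ := hmem k0 hk0
          rw [hk0a]
          exact (hsfun k0 hk0n).1
        have hrm : Multiset.count a q.roots = Multiset.count a p.roots + 1 := by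
          rw [count_roots, count_roots]
          have hd := derivative_rootMultiplicity_of_root (p := P - C c) (t := a) hroota
          rw [hqd c] at hd
          have hpos : 0 < rootMultiplicity a (P - C c) := (rootMultiplicity_pos (hq0 c)).2 hroota
          show rootMultiplicity a (P - C c) = rootMultiplicity a p + 1
          omega
        have hcount_p : Multiset.count a p.roots
            = ((Finset.Icc 1 n).filter (fun kk => a = w kk)).card := by
          rw [hproots, Multiset.count_map]
          rfl
        set k1 := Ta.min' hne with hk1def
        set k2 := Ta.max' hne with hk2def
        have hk12 : k1 ≤ k2 := Finset.min'_le _ _ (Ta.max'_mem hne)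
        have hsub : Ta ⊆ Finset.Icc k1 k2 := fun x hx =>
          Finset.mem_Icc.2 ⟨Finset.min'_le _ _ hx, Finset.le_max' _ _ hx⟩
        have hcard_le : Ta.card ≤ k2 - k1 + 1 := by
          have := Finset.card_le_card hsub
          rw [Nat.card_Icc] at this
          omega
        rcases Nat.eq_or_lt_of_le hk12 with heq | hlt
        · rw [hrm]
          omega
        · have hk2n : k2 ≤ n := (hmem k2 (Ta.max'_mem hne)).1
          have hk2a : a = sfun k2 := (hmem k2 (Ta.max'_mem hne)).2
          have hk1n : k1 ≤ n := (hmem k1 (Ta.min'_mem hne)).1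
          have hk1a : a = sfun k1 := (hmem k1 (Ta.min'_mem hne)).2
          have hup : sfun k2 ≤ w k2 := (hsfun k2 hk2n).2.1 (by omega)
          have hdn : w (k1+1) ≤ sfun k1 := (hsfun k1 hk1n).2.2 (by omega)
          have hK : Finset.Icc (k1+1) k2 ⊆ (Finset.Icc 1 n).filter (fun kk => a = w kk) := by
            intro j hj
            obtain ⟨hj1, hj2⟩ := Finset.mem_Icc.1 hj
            have hwj1 : w j ≤ w (k1+1) := hanti (k1+1) j (by omega) hj1 (by omega)
            have hwj2 : w k2 ≤ w j := hanti j k2 (by omega) hj2 hk2n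
            refine Finset.mem_filter.2 ⟨Finset.mem_Icc.2 ⟨by omega, by omega⟩, ?_⟩
            have ha1 : a ≤ w j := by rw [hk2a]; linarith
            have ha2 : w j ≤ a := by rw [hk1a]; linarith
            linarith
          have hcK := Finset.card_le_card hK
          rw [Nat.card_Icc] at hcK
          rw [hrm, hcount_p]
          omega
      have hcT := Multiset.card_le_card hT
      rw [Multiset.card_map] at hcT
      have : Multiset.card (Finset.range (n+1)).val = n + 1 := by
        rw [← Finset.card_def, Finset.card_range]
      omega

    obtain ⟨c, hcard⟩ := hmain
    exact ⟨c, im_eq_zero_of_card_roots _ hcard⟩
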